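/- Let X ∈ ℝ^{n×p} (p ≥ 1) have columns x₁,…,xₚ, let y ∈ ℝⁿ be a nonzero vector in the column space of X, and let α > 0 be such that X and αy satisfy the vertex non-cover condition. Suppose η > 0 satisfies η < 2α‖y‖₂² − 2·max_{i∈[p]} ⟨y, xᵢ⟩. Let T be the convex cone {Σ_{i=1}^p λᵢ·(xᵢ − αy) : λᵢ ≥ 0}, and let I ⊆ [p] be a set of indices such that every i ∈ [p] for which xᵢ − αy generates an extreme ray of T belongs to I. Then for every global minimizer β* of β ↦ ‖Xβ − y‖₂² + η·Σ_{i=1}^p βᵢ over the nonnegative orthant {β ∈ ℝᵖ : βᵢ ≥ 0 for all i}, one has βᵢ* = 0 for every i ∉ I. -/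

import Mathlib

open Finset RealInnerProductSpace

noncomputable section

/-- A nonzero vector `w` generates an extreme ray of the convex cone `T`. -/
def GeneratesExtremeRay {E : Type*} [AddCommGroup E] [Module ℝ E]
    (T : Set E) (w : E) : Prop :=
  w ≠ 0 ∧ w ∈ T ∧ ∀ w₁ w₂, w₁ ∈ T → w₂ ∈ T → w = w₁ + w₂ →
    (∃ c : ℝ, 0 ≤ c ∧ w₁ = c • w) ∧ (∃ c : ℝ, 0 ≤ c ∧ w₂ = c • w)

/-- `X` (with columns `x i`) and the point `v` satisfy the vertex non-cover condition. -/
def VertexNonCover {E : Type*} [AddCommGroup E] [Module ℝ E] {p : ℕ}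
    (x : Fin p → E) (v : E) : Prop :=
  (∀ i, v ≠ x i) ∧
    Set.extremePoints ℝ (convexHull ℝ (Set.range x ∪ {v})) = Set.range x ∪ {v}

/-- If `v` is an extreme point of the convex hull of `S` and `v` is a (finite) convex
combination of points of `S`, then every point appearing with nonzero weight equals `v`. -/
lemma extreme_comb_eq {E : Type*} [AddCommGroup E] [Module ℝ E] (S : Set E)
    {ι : Type*} [Fintype ι] [DecidableEq ι] (a : ι → ℝ) (z : ι → E) (ha : ∀ j, 0 ≤ a j)
    (hsum : ∑ j, a j = 1) (hz : ∀ j, z j ∈ S) {v : E}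
    (hv : v = ∑ j, a j • z j)
    (hex : v ∈ Set.extremePoints ℝ (convexHull ℝ S)) :
    ∀ j, a j ≠ 0 → z j = v := by
  intro j hj
  have haj : 0 < a j := (ha j).lt_of_ne (Ne.symm hj)
  by_cases h1 : a j = 1
  · -- all other weights vanish
    have hz0 : ∀ k ∈ Finset.univ.erase j, a k = 0 := by
      have herase : a j + ∑ k ∈ Finset.univ.erase j, a k = 1 := by
        rw [Finset.add_sum_erase Finset.univ a (Finset.mem_univ j)]; exact hsum
      have hzero : ∑ k ∈ Finset.univ.erase j, a k = 0 := by linarith [herase, h1 ▸ herase]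
      intro k hk
      have hnn : ∀ k ∈ Finset.univ.erase j, 0 ≤ a k := fun k _ => ha k
      exact (Finset.sum_eq_zero_iff_of_nonneg hnn).mp hzero k hk
    have : v = a j • z j := by
      rw [hv, Finset.sum_eq_single j]
      · intro k _ hkj
        rw [hz0 k (Finset.mem_erase.mpr ⟨hkj, Finset.mem_univ k⟩), zero_smul]
      · intro h; exact absurd (Finset.mem_univ j) h
    rw [this, h1, one_smul]
  · have hj1 : a j < 1 := by
      have : a j ≤ ∑ k, a k :=
        Finset.single_le_sum (fun k _ => ha k) (Finset.mem_univ j)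
      rw [hsum] at this
      exact lt_of_le_of_ne this h1
    have hd : 0 < 1 - a j := by linarith
    have hsum' : ∑ k ∈ Finset.univ.erase j, a k = 1 - a j := by
      have herase : a j + ∑ k ∈ Finset.univ.erase j, a k = 1 := by
        rw [Finset.add_sum_erase Finset.univ a (Finset.mem_univ j)]; exact hsum
      linarith
    set q : E := (1 - a j)⁻¹ • ∑ k ∈ Finset.univ.erase j, a k • z k with hq
    have hqmem : q ∈ convexHull ℝ S := by
      have := Finset.centerMass_mem_convexHull (Finset.univ.erase j)
        (w := a) (fun k _ => ha k) (by rw [hsum']; exact hd) (z := z) (fun k _ => hz k)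
      rwa [Finset.centerMass, hsum'] at this
    have hseg : v ∈ openSegment ℝ (z j) q := by
      refine ⟨a j, 1 - a j, haj, hd, by ring, ?_⟩
      rw [hq, smul_inv_smul₀ (ne_of_gt hd)]
      rw [hv, ← Finset.add_sum_erase Finset.univ (fun k => a k • z k) (Finset.mem_univ j)]
    exact hex.2 (subset_convexHull ℝ S (hz j)) hqmem hseg

set_option maxHeartbeats 1000000 in
theorem stmt1 {n p : ℕ} (hp : 0 < p)
    (x : Fin p → EuclideanSpace ℝ (Fin n)) (y : EuclideanSpace ℝ (Fin n))
    (hy0 : y ≠ 0)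
    (hycol : ∃ c : Fin p → ℝ, y = ∑ i, c i • x i)
    (α : ℝ) (hα : 0 < α)
    (hvnc : VertexNonCover x (α • y))
    (η : ℝ) (hη0 : 0 < η)
    (hη : η < 2 * α * ‖y‖ ^ 2 - 2 * Finset.univ.sup'
      (Finset.univ_nonempty_iff.mpr ⟨⟨0, hp⟩⟩) (fun i => ⟪y, x i⟫))
    (T : Set (EuclideanSpace ℝ (Fin n)))
    (hT : T = {v | ∃ lam : Fin p → ℝ, (∀ i, 0 ≤ lam i) ∧
      v = ∑ i, lam i • (x i - α • y)})
    (I : Set (Fin p))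
    (hI : ∀ i, GeneratesExtremeRay T (x i - α • y) → i ∈ I)
    (β : Fin p → ℝ) (hβ : ∀ i, 0 ≤ β i)
    (hmin : ∀ γ : Fin p → ℝ, (∀ i, 0 ≤ γ i) →
      ‖(∑ i, β i • x i) - y‖ ^ 2 + η * ∑ i, β i ≤
        ‖(∑ i, γ i • x i) - y‖ ^ 2 + η * ∑ i, γ i) :
    ∀ i, i ∉ I → β i = 0 := by
  intro i hiI
  by_contra hβi0
  have hβi : 0 < β i := lt_of_le_of_ne (hβ i) (Ne.symm hβi0)
  set M : ℝ := Finset.univ.sup'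
      (Finset.univ_nonempty_iff.mpr ⟨⟨0, hp⟩⟩) (fun i => ⟪y, x i⟫) with hMdef
  set r : EuclideanSpace ℝ (Fin n) := (∑ j, β j • x j) - y with hrdef
  set s : ℝ := ∑ j, β j with hsdef
  -- Basic perturbation inequality (first-order optimality)
  have key : ∀ (j : Fin p) (δ : ℝ), 0 ≤ β j + δ →
      0 ≤ 2 * (δ * ⟪r, x j⟫) + δ ^ 2 * ‖x j‖ ^ 2 + η * δ := by
    intro j δ hδ
    set γ : Fin p → ℝ := Function.update β j (β j + δ) with hγdef
    have hγ0 : ∀ k, 0 ≤ γ k := by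
      intro k
      by_cases h : k = j
      · subst h; simpa [hγdef] using hδ
      · simpa [hγdef, Function.update_of_ne h] using hβ k
    have hsumx : ∑ k, γ k • x k = (∑ k, β k • x k) + δ • x j := by
      have hterm : ∀ k, γ k • x k = β k • x k + (if k = j then δ • x j else 0) := by
        intro k
        by_cases h : k = j
        · subst h; simp [hγdef, add_smul]
        · simp [hγdef, Function.update_of_ne h, h]
      rw [Finset.sum_congr rfl (fun k _ => hterm k), Finset.sum_add_distrib,
        Finset.sum_ite_eq' Finset.univ j]
      simp
    have hsum1 : ∑ k, γ k = s + δ := by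
      have hterm : ∀ k, γ k = β k + (if k = j then δ else 0) := by
        intro k
        by_cases h : k = j
        · subst h; simp [hγdef]
        · simp [hγdef, Function.update_of_ne h, h]
      rw [Finset.sum_congr rfl (fun k _ => hterm k), Finset.sum_add_distrib,
        Finset.sum_ite_eq' Finset.univ j]
      simp [hsdef]
    have h := hmin γ hγ0
    rw [hsumx, hsum1] at h
    have hrw : (∑ k, β k • x k) + δ • x j - y = r + δ • x j := by
      rw [hrdef]; abel
    rw [hrw] at h
    have hexp : ‖r + δ • x j‖ ^ 2 = ‖r‖ ^ 2 + 2 * (δ * ⟪r, x j⟫) + δ ^ 2 * ‖x j‖ ^ 2 := by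
      rw [norm_add_sq_real, real_inner_smul_right, norm_smul, mul_pow,
        Real.norm_eq_abs, sq_abs]
    rw [hexp] at h
    linarith
  -- KKT conditions
  have kkt1 : ∀ j, -(η / 2) ≤ ⟪r, x j⟫ := by
    intro j
    by_contra hcon
    push_neg at hcon
    set g : ℝ := 2 * ⟪r, x j⟫ + η with hg
    have hgneg : g < 0 := by rw [hg]; linarith
    set N : ℝ := ‖x j‖ ^ 2 with hN
    have hNnn : 0 ≤ N := by positivity
    set δ : ℝ := -g / (N + 1) with hδdef
    have hδpos : 0 < δ := by
      rw [hδdef]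
      apply div_pos (by linarith) (by positivity)
    have hk := key j δ (by linarith [hβ j])
    have hprod : δ * (N + 1) = -g := by
      rw [hδdef]; field_simp
    -- 0 ≤ 2δ⟪r,x j⟫ + δ²N + ηδ = δ(g + δN)
    have hfac : 2 * (δ * ⟪r, x j⟫) + δ ^ 2 * N + η * δ = δ * (g + δ * N) := by
      rw [hg]; ring
    rw [hfac] at hk
    have hX : 0 ≤ g + δ * N := by
      by_contra hX
      push_neg at hX
      have : δ * (g + δ * N) < 0 := mul_neg_of_pos_of_neg hδpos hX
      linarith
    -- but δN = -g - δ, so g + δN = -δ < 0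
    nlinarith [hprod, hX, hδpos]
  have kkt2 : ∀ j, 0 < β j → ⟪r, x j⟫ = -(η / 2) := by
    intro j hbj
    refine le_antisymm ?_ (kkt1 j)
    by_contra hcon
    push_neg at hcon
    set g : ℝ := 2 * ⟪r, x j⟫ + η with hg
    have hgpos : 0 < g := by rw [hg]; linarith
    set N : ℝ := ‖x j‖ ^ 2 with hN
    have hNnn : 0 ≤ N := by positivity
    set ε : ℝ := min (β j) (g / (N + 1)) with hεdef
    have hεpos : 0 < ε := by
      rw [hεdef]
      exact lt_min hbj (by positivity)
    have hεle : ε ≤ β j := min_le_left _ _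
    have hεle2 : ε ≤ g / (N + 1) := min_le_right _ _
    have hk := key j (-ε) (by linarith)
    have hfac : 2 * (-ε * ⟪r, x j⟫) + (-ε) ^ 2 * N + η * (-ε) = ε * (-g + ε * N) := by
      rw [hg]; ring
    rw [hfac] at hk
    have hX : 0 ≤ -g + ε * N := by
      by_contra hX
      push_neg at hX
      have : ε * (-g + ε * N) < 0 := mul_neg_of_pos_of_neg hεpos hX
      linarith
    -- g ≤ εN ≤ g·N/(N+1) < g
    have hfrac : g / (N + 1) * (N + 1) = g := by field_simp
    have h2 : ε * N ≤ g / (N + 1) * N :=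
      mul_le_mul_of_nonneg_right hεle2 hNnn
    have h3 : 0 < g / (N + 1) := by positivity
    nlinarith [hX, h2, hfrac, h3]
  -- derived scalar relations
  set t : ℝ := ⟪r, y⟫ with htdef
  have hspos : 0 < s := by
    have : β i ≤ s := Finset.single_le_sum (fun k _ => hβ k) (Finset.mem_univ i)
    linarith
  have hsum_eq : (∑ j, β j • x j) = r + y := by rw [hrdef]; abel
  have hte : 2 * (‖r‖ ^ 2 + t) + η * s = 0 := by
    have hzero : ∀ j, β j * (2 * ⟪r, x j⟫ + η) = 0 := by
      intro j
      rcases eq_or_lt_of_le (hβ j) with h | h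
      · rw [← h]; ring
      · rw [kkt2 j h]; ring
    have hsum0 : ∑ j, β j * (2 * ⟪r, x j⟫ + η) = 0 :=
      Finset.sum_eq_zero fun j _ => hzero j
    have hsplit : ∑ j, β j * (2 * ⟪r, x j⟫ + η)
        = 2 * (∑ j, β j * ⟪r, x j⟫) + η * s := by
      rw [Finset.sum_congr rfl (fun j _ => by ring :
        ∀ j ∈ Finset.univ, β j * (2 * ⟪r, x j⟫ + η)
          = 2 * (β j * ⟪r, x j⟫) + η * β j)]
      rw [Finset.sum_add_distrib, ← Finset.mul_sum, ← Finset.mul_sum, hsdef]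
    have hinner : ∑ j, β j * ⟪r, x j⟫ = ‖r‖ ^ 2 + t := by
      have h1 : ⟪r, ∑ j, β j • x j⟫ = ∑ j, β j * ⟪r, x j⟫ := by
        rw [inner_sum]
        exact Finset.sum_congr rfl fun j _ => real_inner_smul_right r (x j) (β j)
      rw [← h1, hsum_eq, inner_add_right, real_inner_self_eq_norm_sq, htdef]
    rw [hsplit, hinner] at hsum0
    linarith
  have htM : t ≤ s * M - ‖y‖ ^ 2 := by
    have h1 : t = (∑ j, β j * ⟪y, x j⟫) - ‖y‖ ^ 2 := by
      rw [htdef, hrdef, inner_sub_left, sum_inner, real_inner_self_eq_norm_sq]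
      congr 1
      exact Finset.sum_congr rfl fun j _ => by
        rw [real_inner_smul_left, real_inner_comm]
    have h2 : ∑ j, β j * ⟪y, x j⟫ ≤ ∑ j, β j * M := by
      refine Finset.sum_le_sum fun j _ => ?_
      exact mul_le_mul_of_nonneg_left
        (Finset.le_sup' (fun i => ⟪y, x i⟫) (Finset.mem_univ j)) (hβ j)
    rw [← Finset.sum_mul, ← hsdef] at h2
    linarith [h1, h2]
  have hf0 : ‖r‖ ^ 2 + η * s ≤ ‖y‖ ^ 2 := by
    have h := hmin (fun _ => 0) (fun _ => le_refl 0)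
    simpa [hrdef, hsdef] using h
  -- Key sign fact : η/2 + α t < 0
  have hA : η / 2 + α * t < 0 := by
    by_contra hcon
    push_neg at hcon
    have e1 : t = -‖r‖ ^ 2 - η * s / 2 := by linarith
    have e2 : η * s / 2 - ‖y‖ ^ 2 ≤ t := by linarith [hf0, e1]
    have e3 : η * s / 2 ≤ s * M := by linarith [htM, e2]
    have hM2 : η / 2 ≤ M := by
      by_contra hM2
      push_neg at hM2
      have : s * M < s * (η / 2) := mul_lt_mul_of_pos_left hM2 hspos
      nlinarith
    have hMpos : 0 < M := lt_of_lt_of_le (half_pos hη0) hM2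
    have e4 : α * ‖y‖ ^ 2 - η / 2 ≤ α * (s * M) := by
      have := mul_le_mul_of_nonneg_left htM hα.le
      nlinarith
    have e5 : M < α * (s * M) := by nlinarith [hη]
    have e6 : 1 < α * s := by
      by_contra h6
      push_neg at h6
      have : α * (s * M) ≤ 1 * M := by
        rw [← mul_assoc]
        exact mul_le_mul_of_nonneg_right (by linarith) hMpos.le
      nlinarith
    have e7 : 0 ≤ α * ‖r‖ ^ 2 := by positivity
    nlinarith [mul_pos hη0 (sub_pos.mpr e6), e1, hcon, e7]
  -- the generators
  set w : Fin p → EuclideanSpace ℝ (Fin n) := fun j => x j - α • y with hwdef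
  have hwapp : ∀ j, w j = x j - α • y := fun j => by rw [hwdef]
  have hw0 : ∀ j, w j ≠ 0 := by
    intro j h
    rw [hwapp] at h
    exact hvnc.1 j (sub_eq_zero.mp h).symm
  have hKw : ∀ j, -(η / 2) - α * t ≤ ⟪r, w j⟫ := by
    intro j
    rw [hwapp, inner_sub_right, real_inner_smul_right]
    linarith [kkt1 j]
  have hKwi : ⟪r, w i⟫ = -(η / 2) - α * t := by
    rw [hwapp, inner_sub_right, real_inner_smul_right, kkt2 i hβi]
  have hA'pos : 0 < -(η / 2) - α * t := by linarith
  -- prove that w i generates an extreme ray of T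
  have hgen : GeneratesExtremeRay T (x i - α • y) := by
    refine ⟨hw0 i, ?_, ?_⟩
    · rw [hT]
      refine ⟨fun j => if j = i then 1 else 0, fun j => by positivity, ?_⟩
      rw [Finset.sum_congr rfl (fun j _ => by
        split_ifs with h
        · subst h; rw [one_smul]
        · rw [zero_smul] :
        ∀ j ∈ Finset.univ, (if j = i then (1:ℝ) else 0) • (x j - α • y)
          = if j = i then x i - α • y else 0)]
      rw [Finset.sum_ite_eq' Finset.univ i]
      simp
    · intro w₁ w₂ h1 h2 hsum12
      rw [hT] at h1 h2
      obtain ⟨μ, hμ0, hμ⟩ := h1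
      obtain ⟨ν, hν0, hν⟩ := h2
      set lam : Fin p → ℝ := fun j => μ j + ν j with hlamdef
      have hlam0 : ∀ j, 0 ≤ lam j := fun j => add_nonneg (hμ0 j) (hν0 j)
      have hlam : w i = ∑ j, lam j • w j := by
        simp only [hwapp]
        rw [hsum12, hμ, hν, ← Finset.sum_add_distrib]
        exact Finset.sum_congr rfl fun j _ => (add_smul (μ j) (ν j) _).symm
      -- total mass at most 1
      have hm1 : ∑ j, lam j ≤ 1 := by
        have h1' : -(η / 2) - α * t = ∑ j, lam j * ⟪r, w j⟫ := by
          rw [← hKwi, hlam, inner_sum]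
          exact Finset.sum_congr rfl fun j _ => real_inner_smul_right r (w j) (lam j)
        have h2' : ∑ j, lam j * (-(η / 2) - α * t) ≤ ∑ j, lam j * ⟪r, w j⟫ :=
          Finset.sum_le_sum fun j _ => mul_le_mul_of_nonneg_left (hKw j) (hlam0 j)
        rw [← Finset.sum_mul] at h2'
        rw [← h1'] at h2'
        by_contra hcon
        push_neg at hcon
        nlinarith [h2', hA'pos, hcon]
      -- master claim : every index in the support has the same generator
      have hmaster : ∀ j, lam j ≠ 0 → w j = w i := by
        intro k hk
        by_cases hki : k = i
        · rw [hki]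
        · by_cases hli : 1 ≤ lam i
          · exfalso
            have herase : lam i + ∑ j ∈ Finset.univ.erase i, lam j = ∑ j, lam j :=
              Finset.add_sum_erase Finset.univ lam (Finset.mem_univ i)
            have hsle : ∑ j ∈ Finset.univ.erase i, lam j ≤ 0 := by linarith [hm1]
            have hkle : lam k ≤ ∑ j ∈ Finset.univ.erase i, lam j :=
              Finset.single_le_sum (fun j _ => hlam0 j)
                (Finset.mem_erase.mpr ⟨hki, Finset.mem_univ k⟩)
            have : lam k = 0 := le_antisymm (by linarith) (hlam0 k)
            exact hk this
          · push_neg at hli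
            have hd : 0 < 1 - lam i := by linarith
            -- rearrange : (1 - lam i) • w i = ∑_{j ≠ i} lam j • w j
            have herase : lam i • w i + ∑ j ∈ Finset.univ.erase i, lam j • w j
                = ∑ j, lam j • w j :=
              Finset.add_sum_erase Finset.univ (fun j => lam j • w j) (Finset.mem_univ i)
            have hwi : (1 - lam i) • w i = ∑ j ∈ Finset.univ.erase i, lam j • w j := by
              rw [← hlam] at herase
              rw [sub_smul, one_smul]
              exact sub_eq_of_eq_add' herase.symm
            set c : Fin p → ℝ := fun j => if j = i then 0 else lam j / (1 - lam i)
              with hcdef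
            have hc0 : ∀ j, 0 ≤ c j := by
              intro j
              simp only [hcdef]
              split_ifs
              · exact le_refl 0
              · exact div_nonneg (hlam0 j) hd.le
            have hcw : w i = ∑ j, c j • w j := by
              have hstep : ∑ j, c j • w j
                  = ∑ j ∈ Finset.univ.erase i, (lam j / (1 - lam i)) • w j := by
                rw [← Finset.add_sum_erase Finset.univ (fun j => c j • w j) (Finset.mem_univ i)]
                have hci : c i = 0 := by simp [hcdef]
                rw [hci, zero_smul, zero_add]
                refine Finset.sum_congr rfl fun j hj => ?_
                have hji : j ≠ i := (Finset.mem_erase.mp hj).1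
                simp [hcdef, hji]
              rw [hstep]
              have hstep2 : ∀ j, (lam j / (1 - lam i)) • w j
                  = (1 - lam i)⁻¹ • (lam j • w j) := by
                intro j
                rw [div_eq_inv_mul, mul_smul]
              rw [Finset.sum_congr rfl fun j _ => hstep2 j, ← Finset.smul_sum, ← hwi,
                smul_smul, inv_mul_cancel₀ (ne_of_gt hd), one_smul]
            set m' : ℝ := ∑ j, c j with hm'def
            have hm'le : m' ≤ 1 := by
              have hsum' : ∑ j ∈ Finset.univ.erase i, lam j = (∑ j, lam j) - lam i := by
                have := Finset.add_sum_erase Finset.univ lam (Finset.mem_univ i)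
                linarith
              have hcsum : m' = (∑ j ∈ Finset.univ.erase i, lam j) / (1 - lam i) := by
                rw [hm'def, ← Finset.add_sum_erase Finset.univ c (Finset.mem_univ i)]
                have hci : c i = 0 := by simp [hcdef]
                rw [hci, zero_add, Finset.sum_div]
                refine Finset.sum_congr rfl fun j hj => ?_
                have hji : j ≠ i := (Finset.mem_erase.mp hj).1
                simp [hcdef, hji]
              rw [hcsum, div_le_one hd, hsum']
              linarith [hm1]
            -- x i is a convex combination of the other columns and α • y
            have hxcomb : x i = (1 - m') • (α • y) + ∑ j, c j • x j := by
              have e1 : ∑ j, c j • w j = (∑ j, c j • x j) - m' • (α • y) := by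
                rw [hwdef]
                simp only [smul_sub]
                rw [Finset.sum_sub_distrib, ← Finset.sum_smul, hm'def]
              have e2 : x i - α • y = (∑ j, c j • x j) - m' • (α • y) := by
                rw [← e1, ← hcw, hwdef]
              have e3 : x i = (∑ j, c j • x j) - m' • (α • y) + α • y :=
                eq_add_of_sub_eq e2
              rw [e3, sub_smul, one_smul]
              abel
            -- apply the extreme point property via the helper lemma
            have hex : x i ∈ Set.extremePoints ℝ
                (convexHull ℝ (Set.range x ∪ {α • y})) := by
              rw [hvnc.2]
              exact Or.inl ⟨i, rfl⟩
            have happ := extreme_comb_eq (Set.range x ∪ {α • y})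
              (fun o : Option (Fin p) => o.elim (1 - m') c)
              (fun o : Option (Fin p) => o.elim (α • y) x)
              (fun o => by
                cases o with
                | none => simpa using sub_nonneg.mpr hm'le
                | some j => simpa using hc0 j)
              (by
                rw [Fintype.sum_option]
                simp only [Option.elim]
                rw [hm'def]
                ring)
              (fun o => by
                cases o with
                | none => exact Or.inr rfl
                | some j => exact Or.inl ⟨j, rfl⟩)
              (v := x i)
              (by
                rw [Fintype.sum_option]
                simpa using hxcomb)
              hex
            have hck : c k ≠ 0 := by
              simp only [hcdef]
              rw [if_neg hki]
              exact div_ne_zero hk (ne_of_gt hd)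
            have := happ (some k) (by simpa using hck)
            simp only [Option.elim] at this
            rw [hwapp k, hwapp i, this]
      -- conclude both parts are nonnegative multiples of w i
      constructor
      · refine ⟨∑ j, μ j, Finset.sum_nonneg fun j _ => hμ0 j, ?_⟩
        rw [hμ, Finset.sum_smul]
        refine Finset.sum_congr rfl fun j _ => ?_
        by_cases hμj : μ j = 0
        · rw [hμj, zero_smul, zero_smul]
        · have hlj : lam j ≠ 0 := by
            have : 0 < μ j := (hμ0 j).lt_of_ne (Ne.symm hμj)
            have := add_pos_of_pos_of_nonneg this (hν0 j)
            exact ne_of_gt this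
          rw [show x j - α • y = w j from rfl, hmaster j hlj, hwdef]
      · refine ⟨∑ j, ν j, Finset.sum_nonneg fun j _ => hν0 j, ?_⟩
        rw [hν, Finset.sum_smul]
        refine Finset.sum_congr rfl fun j _ => ?_
        by_cases hνj : ν j = 0
        · rw [hνj, zero_smul, zero_smul]
        · have hlj : lam j ≠ 0 := by
            have : 0 < ν j := (hν0 j).lt_of_ne (Ne.symm hνj)
            have := add_pos_of_nonneg_of_pos (hμ0 j) this
            exact ne_of_gt this
          rw [show x j - α • y = w j from rfl, hmaster j hlj, hwdef]
  exact hiI (hI i hgen)
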